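/- Let q be a real quadratic polynomial with two distinct real roots r₁ < r₂. Then the Newton map N_q has exactly the fixed points r₁ and r₂, the midpoint c = (r₁+r₂)/2 is the unique point where N_q is undefined, N_q maps (c, ∞) into itself with iterates converging to r₂, and N_q maps (−∞, c) into itself with iterates converging to r₁. -/

import Mathlib

/-- One-dimensional Newton map. -/
noncomputable def newton1 (q : ℝ → ℝ) (x : ℝ) : ℝ :=
  x - q x / deriv q x

/-- For a quadratic `q(x) = a(x − r₁)(x − r₂)` with distinct real roots `r₁ < r₂`:
the fixed points of `N_q` are exactly `r₁` and `r₂`; the midpoint `c = (r₁+r₂)/2` is the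
unique point where `N_q` is undefined (`q' = 0`); `(c, ∞)` is invariant with iterates
converging to `r₂`, and `(−∞, c)` is invariant with iterates converging to `r₁`. -/
theorem stmt_19 (a r₁ r₂ : ℝ) (ha : a ≠ 0) (hr : r₁ < r₂)
    (q : ℝ → ℝ) (hq : ∀ x, q x = a * (x - r₁) * (x - r₂))
    (c : ℝ) (hc : c = (r₁ + r₂) / 2) :
    (∀ x : ℝ, deriv q x ≠ 0 → (newton1 q x = x ↔ x = r₁ ∨ x = r₂)) ∧
    (∀ x : ℝ, deriv q x = 0 ↔ x = c) ∧
    (∀ x : ℝ, x > c → newton1 q x > c) ∧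
    (∀ x : ℝ, x > c →
      Filter.Tendsto (fun k : ℕ => (newton1 q)^[k] x) Filter.atTop (nhds r₂)) ∧
    (∀ x : ℝ, x < c → newton1 q x < c) ∧
    (∀ x : ℝ, x < c →
      Filter.Tendsto (fun k : ℕ => (newton1 q)^[k] x) Filter.atTop (nhds r₁)) := by
  set d : ℝ := (r₂ - r₁) / 2 with hd_def
  have hd : 0 < d := by rw [hd_def]; linarith
  have hr₁ : r₁ = c - d := by rw [hc, hd_def]; ring
  have hr₂ : r₂ = c + d := by rw [hc, hd_def]; ring
  have hqfun : q = fun x => a * ((x - r₁) * (x - r₂)) := by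
    funext x; rw [hq]; ring
  have hderiv : ∀ x, deriv q x = 2 * a * (x - c) := by
    intro x
    have h1 : HasDerivAt (fun y : ℝ => (y - r₁) * (y - r₂))
        (1 * (x - r₂) + (x - r₁) * 1) x :=
      ((hasDerivAt_id x).sub_const r₁).mul ((hasDerivAt_id x).sub_const r₂)
    have h2 := h1.const_mul a
    rw [hqfun, h2.deriv, hc]; ring
  have h2a : (2 : ℝ) * a ≠ 0 := mul_ne_zero two_ne_zero ha
  have hN : ∀ x : ℝ, x ≠ c →
      newton1 q x - c = ((x - c) ^ 2 + d ^ 2) / (2 * (x - c)) := by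
    intro x hx
    have hxc : x - c ≠ 0 := sub_ne_zero.mpr hx
    rw [newton1, hderiv, hq, hr₁, hr₂]
    field_simp
    ring
  -- right side
  have hNr : ∀ x : ℝ, c < x →
      newton1 q x - r₂ = (x - c - d) ^ 2 / (2 * (x - c)) := by
    intro x hx
    have hxc : (0:ℝ) < x - c := by linarith
    have h := hN x (ne_of_gt hx)
    rw [hr₂]
    field_simp at h ⊢
    nlinarith [h]
  have hstep : ∀ x : ℝ, c < x → r₂ ≤ newton1 q x := by
    intro x hx
    have hxc : (0:ℝ) < x - c := by linarith
    have h := hNr x hx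
    nlinarith [sq_nonneg (x - c - d), div_nonneg (sq_nonneg (x - c - d)) (by linarith : (0:ℝ) ≤ 2 * (x - c))]
  have hhalf : ∀ x : ℝ, r₂ ≤ x → newton1 q x - r₂ ≤ (x - r₂) / 2 := by
    intro x hx
    have hcx : c < x := by rw [hr₂] at hx; linarith
    have hxc : (0:ℝ) < x - c := by linarith
    have h := hNr x hcx
    rw [h, div_le_div_iff₀ (by linarith) two_pos]
    have hxd : d ≤ x - c := by rw [hr₂] at hx; linarith
    nlinarith
  -- left side
  have hNl : ∀ x : ℝ, x < c →
      newton1 q x - r₁ = (x - c + d) ^ 2 / (2 * (x - c)) := by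
    intro x hx
    have hxc : x - c < 0 := by linarith
    have h := hN x (ne_of_lt hx)
    rw [hr₁]
    have hne : 2 * (x - c) ≠ 0 := by intro h0; nlinarith
    have hxc0 : x - c ≠ 0 := ne_of_lt hxc
    field_simp at h ⊢
    nlinarith [h]
  have hstep' : ∀ x : ℝ, x < c → newton1 q x ≤ r₁ := by
    intro x hx
    have hxc : x - c < 0 := by linarith
    have h := hNl x hx
    have := div_nonpos_of_nonneg_of_nonpos (sq_nonneg (x - c + d)) (by linarith : 2 * (x - c) ≤ 0)
    nlinarith
  have hhalf' : ∀ x : ℝ, x ≤ r₁ → r₁ - newton1 q x ≤ (r₁ - x) / 2 := by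
    intro x hx
    have hcx : x < c := by rw [hr₁] at hx; linarith
    have hxc : x - c < 0 := by linarith
    have h := hNl x hcx
    have hxd : x - c ≤ -d := by rw [hr₁] at hx; linarith
    have : r₁ - newton1 q x = (x - c + d) ^ 2 / (-(2 * (x - c))) := by
      rw [div_neg, ← h]; ring
    rw [this, div_le_div_iff₀ (by linarith) two_pos]
    nlinarith
  refine ⟨?_, ?_, ?_, ?_, ?_, ?_⟩
  · -- fixed points
    intro x hx
    rw [newton1, sub_eq_self, div_eq_zero_iff, hq]
    constructor
    · rintro (h | h)
      · rcases mul_eq_zero.mp h with h' | h'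
        · rcases mul_eq_zero.mp h' with h'' | h''
          · exact absurd h'' ha
          · exact Or.inl (by linarith [sub_eq_zero.mp h''])
        · exact Or.inr (by linarith [sub_eq_zero.mp h'])
      · exact absurd h hx
    · rintro (h | h) <;> subst h <;> left <;> ring
  · -- derivative zero iff x = c
    intro x
    rw [hderiv, mul_eq_zero]
    constructor
    · rintro (h | h)
      · exact absurd h h2a
      · linarith [sub_eq_zero.mp h]
    · intro h; subst h; right; ring
  · -- right invariance
    intro x hx
    have := hstep x hx
    rw [hr₂] at this; linarith
  · -- right convergence
    intro x hx
    have hy : r₂ ≤ newton1 q x := hstep x hx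
    have hcr₂ : c < r₂ := by rw [hr₂]; linarith
    set f := newton1 q with hf
    have hiter : ∀ k : ℕ, r₂ ≤ f^[k] (f x) ∧
        f^[k] (f x) - r₂ ≤ (f x - r₂) * (1/2) ^ k := by
      intro k
      induction k with
      | zero => simpa using hy
      | succ n ih =>
        obtain ⟨h1, h2⟩ := ih
        rw [Function.iterate_succ_apply']
        refine ⟨hstep _ (lt_of_lt_of_le hcr₂ h1), ?_⟩
        have h4 := hhalf _ h1
        have heq : (f x - r₂) * (1/2 : ℝ) ^ (n + 1) = ((f x - r₂) * (1/2) ^ n) / 2 := by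
          ring
        rw [heq]; linarith
    have hup : Filter.Tendsto (fun k : ℕ => r₂ + (f x - r₂) * (1/2) ^ k)
        Filter.atTop (nhds r₂) := by
      have h0 : Filter.Tendsto (fun k : ℕ => ((1:ℝ)/2) ^ k) Filter.atTop (nhds 0) :=
        tendsto_pow_atTop_nhds_zero_of_lt_one (by norm_num) (by norm_num)
      have h1 : Filter.Tendsto (fun k : ℕ => r₂ + (f x - r₂) * (1/2) ^ k)
          Filter.atTop (nhds (r₂ + (f x - r₂) * 0)) :=
        tendsto_const_nhds.add (tendsto_const_nhds.mul h0)
      simpa using h1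
    have htend : Filter.Tendsto (fun k : ℕ => f^[k] (f x)) Filter.atTop (nhds r₂) := by
      refine tendsto_of_tendsto_of_tendsto_of_le_of_le tendsto_const_nhds hup
        (fun k => (hiter k).1) (fun k => by linarith [(hiter k).2])
    rw [← Filter.tendsto_add_atTop_iff_nat 1]
    exact htend.congr (fun k => (Function.iterate_succ_apply f k x).symm)
  · -- left invariance
    intro x hx
    have := hstep' x hx
    rw [hr₁] at this; linarith
  · -- left convergence
    intro x hx
    have hy : newton1 q x ≤ r₁ := hstep' x hx
    have hcr₁ : r₁ < c := by rw [hr₁]; linarith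
    set f := newton1 q with hf
    have hiter : ∀ k : ℕ, f^[k] (f x) ≤ r₁ ∧
        r₁ - f^[k] (f x) ≤ (r₁ - f x) * (1/2) ^ k := by
      intro k
      induction k with
      | zero => simpa using hy
      | succ n ih =>
        obtain ⟨h1, h2⟩ := ih
        rw [Function.iterate_succ_apply']
        refine ⟨hstep' _ (lt_of_le_of_lt h1 hcr₁), ?_⟩
        have h4 := hhalf' _ h1
        have heq : (r₁ - f x) * (1/2 : ℝ) ^ (n + 1) = ((r₁ - f x) * (1/2) ^ n) / 2 := by
          ring
        rw [heq]; linarith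
    have hlo : Filter.Tendsto (fun k : ℕ => r₁ - (r₁ - f x) * (1/2) ^ k)
        Filter.atTop (nhds r₁) := by
      have h0 : Filter.Tendsto (fun k : ℕ => ((1:ℝ)/2) ^ k) Filter.atTop (nhds 0) :=
        tendsto_pow_atTop_nhds_zero_of_lt_one (by norm_num) (by norm_num)
      have h1 : Filter.Tendsto (fun k : ℕ => r₁ - (r₁ - f x) * (1/2) ^ k)
          Filter.atTop (nhds (r₁ - (r₁ - f x) * 0)) :=
        tendsto_const_nhds.sub (tendsto_const_nhds.mul h0)
      simpa using h1
    have htend : Filter.Tendsto (fun k : ℕ => f^[k] (f x)) Filter.atTop (nhds r₁) := by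
      refine tendsto_of_tendsto_of_tendsto_of_le_of_le hlo tendsto_const_nhds
        (fun k => by linarith [(hiter k).2]) (fun k => (hiter k).1)
    rw [← Filter.tendsto_add_atTop_iff_nat 1]
    exact htend.congr (fun k => (Function.iterate_succ_apply f k x).symm)
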